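/- Under the setup of the operator T above (bilinear kernel with finite rank), if additionally every eigenfunction of T corresponding to the operator norm eigenvalue λ = ‖T‖ is single-signed μ₀-almost everywhere and the eigenspace is one-dimensional, then this eigenspace is contained in E₊ = span(π₁,…,π_n), and λ equals the largest eigenvalue of the n×n matrix Λ with entries Λ_{ij} = 2 ∑_{k=1}^n a_{ik} ⟨π_k π_j, μ₀⟩, i.e. Λ is the matrix of T restricted to E₊ in the basis π₁,…,π_n. -/

import Mathlib

open MeasureTheory

lemma stmt4_aux {n : ℕ} (B Gm : Fin n → Fin n → ℝ) (hB : ∀ i j, B i j = B j i)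
    (hGm : ∀ i j, Gm i j = Gm j i) (v p : Fin n → ℝ) :
    2 * ∑ i, ∑ j, B i j * (∑ k, v k * Gm k i) * p j
      = ∑ j, (∑ i, (2 * ∑ k, B j k * Gm k i) * v i) * p j := by
  simp only [Finset.mul_sum, Finset.sum_mul]
  rw [Finset.sum_comm]
  refine Finset.sum_congr rfl fun j _ => ?_
  rw [Finset.sum_comm (γ := Fin n)]
  refine Finset.sum_congr rfl fun i _ => ?_
  refine Finset.sum_congr rfl fun k _ => ?_
  rw [hB k j, hGm i k]
  ring

/-- Top eigenspace of the bilinear convolution operator `T` lies in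
`E₊ = span(π₁,…,π_n)`, and the operator-norm eigenvalue `λ = ‖T‖` equals the
largest eigenvalue of the matrix `Λ` of `T|_{E₊}` in the basis `π₁,…,π_n`. -/
theorem stmt4 {S : Type*} [MeasurableSpace S] (μ₀ : Measure S) [IsFiniteMeasure μ₀]
    (n m : ℕ) (π : Fin (n + m) → S → ℝ)
    (hπL2 : ∀ i, MemLp (π i) 2 μ₀)
    (hπnn : ∀ i : Fin (n + m), (i : ℕ) < n → ∀ x, 0 ≤ π i x)
    (hind : ∀ c : Fin n → ℝ,
      (fun x => ∑ i, c i * π (Fin.castAdd m i) x) =ᵐ[μ₀] (fun _ => (0:ℝ)) → c = 0)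
    (R : S → S) (hR : MeasurePreserving R μ₀ μ₀) (hRR : R ∘ R = id)
    (hπR_even : ∀ i : Fin (n + m), (i : ℕ) < n → (fun x => π i (R x)) = π i)
    (hπR_odd : ∀ i : Fin (n + m), n ≤ (i : ℕ) → (fun x => π i (R x)) = fun x => - π i x)
    (A : Matrix (Fin (n + m)) (Fin (n + m)) ℝ) (hAsymm : A.IsSymm)
    (hblock : ∀ i j : Fin (n + m),
      (((i : ℕ) < n ∧ n ≤ (j : ℕ)) ∨ (n ≤ (i : ℕ) ∧ (j : ℕ) < n)) → A i j = 0)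
    (hAplus : ∀ i j : Fin (n + m), (i : ℕ) < n → (j : ℕ) < n → 0 ≤ A i j)
    (T : (S → ℝ) → (S → ℝ))
    (hT : ∀ f x, T f x = 2 * ∑ i, ∑ j, A i j * (∫ y, f y * π i y ∂μ₀) * π j x)
    (lam : ℝ) (hlam : 0 < lam)
    -- `lam` is the operator norm of `T` on `L²(μ₀)`:
    (hnorm : ∀ f : S → ℝ, MemLp f 2 μ₀ →
      ∫ x, (T f x)^2 ∂μ₀ ≤ lam^2 * ∫ x, (f x)^2 ∂μ₀)
    -- `lam` is attained as an eigenvalue: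
    (hex : ∃ f : S → ℝ, MemLp f 2 μ₀ ∧ T f =ᵐ[μ₀] (fun x => lam * f x) ∧
      ¬ f =ᵐ[μ₀] (fun _ => (0:ℝ)))
    -- eigenfunctions for `lam` are single-signed a.e.:
    (hsigned : ∀ f : S → ℝ, MemLp f 2 μ₀ → T f =ᵐ[μ₀] (fun x => lam * f x) →
      (∀ᵐ x ∂μ₀, 0 ≤ f x) ∨ (∀ᵐ x ∂μ₀, f x ≤ 0))
    -- the eigenspace for `lam` is one-dimensional:
    (honedim : ∀ f g : S → ℝ, MemLp f 2 μ₀ → T f =ᵐ[μ₀] (fun x => lam * f x) →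
      MemLp g 2 μ₀ → T g =ᵐ[μ₀] (fun x => lam * g x) →
      ¬ g =ᵐ[μ₀] (fun _ => (0:ℝ)) → ∃ c : ℝ, f =ᵐ[μ₀] fun x => c * g x)
    (Λ : Matrix (Fin n) (Fin n) ℝ)
    (hΛ : ∀ i j, Λ i j = 2 * ∑ k : Fin n, A (Fin.castAdd m i) (Fin.castAdd m k) *
      ∫ x, π (Fin.castAdd m k) x * π (Fin.castAdd m j) x ∂μ₀) :
    -- the eigenspace is contained in `E₊`:
    (∀ f : S → ℝ, MemLp f 2 μ₀ → T f =ᵐ[μ₀] (fun x => lam * f x) →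
      ∃ c : Fin n → ℝ, f =ᵐ[μ₀] fun x => ∑ i, c i * π (Fin.castAdd m i) x) ∧
    -- `lam` is the largest eigenvalue of `Λ`:
    (∃ v : Fin n → ℝ, v ≠ 0 ∧ Λ.mulVec v = lam • v) ∧
    (∀ (μ : ℝ) (v : Fin n → ℝ), v ≠ 0 → Λ.mulVec v = μ • v → μ ≤ lam) := by
  classical
  -- basic integrability of products of L² functions
  have hmul : ∀ f g : S → ℝ, MemLp f 2 μ₀ → MemLp g 2 μ₀ →
      Integrable (fun x => f x * g x) μ₀ := by
    intro f g hf hg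
    have h := hg.smul (φ := f) (r := 1) hf
    exact memLp_one_iff_integrable.mp h
  -- R is a measurable embedding; integrals are invariant under R
  have he : MeasurableEmbedding R := by
    let e : S ≃ᵐ S := ⟨⟨R, R, congrFun hRR, congrFun hRR⟩, hR.measurable, hR.measurable⟩
    have := e.measurableEmbedding
    simpa [e, MeasurableEquiv.coe_mk, Equiv.coe_fn_mk] using this
  have hRint : ∀ g : S → ℝ, ∫ x, g (R x) ∂μ₀ = ∫ x, g x ∂μ₀ := fun g =>
    hR.integral_comp he g
  -- flipping an integral against R
  have hflip : ∀ (f : S → ℝ) (i : Fin (n + m)),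
      (∫ y, f (R y) * π i y ∂μ₀) = ∫ y, f y * π i (R y) ∂μ₀ := by
    intro f i
    have h1 : ∀ y, f (R y) * π i (R (R y)) = f (R y) * π i y := by
      intro y
      have hy : R (R y) = y := congrFun hRR y
      rw [hy]
    have h2 := hRint (fun y => f y * π i (R y))
    calc (∫ y, f (R y) * π i y ∂μ₀)
        = ∫ y, f (R y) * π i (R (R y)) ∂μ₀ := by
          exact (integral_congr_ae (Filter.Eventually.of_forall h1)).symm
      _ = ∫ y, f y * π i (R y) ∂μ₀ := h2
  -- π i composed with R in terms of the sign ε i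
  have hpiR : ∀ (i : Fin (n + m)) (x : S),
      π i (R x) = (if (i : ℕ) < n then (1:ℝ) else -1) * π i x := by
    intro i x
    by_cases hi : (i : ℕ) < n
    · have h : π i (R x) = π i x := congrFun (hπR_even i hi) x
      rw [if_pos hi, h, one_mul]
    · have h : π i (R x) = - π i x := congrFun (hπR_odd i (le_of_not_gt hi)) x
      rw [if_neg hi, h, neg_one_mul]
  -- flipped inner products
  have hflip' : ∀ (f : S → ℝ) (i : Fin (n + m)),
      (∫ y, f (R y) * π i y ∂μ₀)
        = (if (i : ℕ) < n then (1:ℝ) else -1) * ∫ y, f y * π i y ∂μ₀ := by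
    intro f i
    rw [hflip f i]
    rw [show (∫ y, f y * π i (R y) ∂μ₀)
        = ∫ y, (if (i : ℕ) < n then (1:ℝ) else -1) * (f y * π i y) ∂μ₀ from
      integral_congr_ae (Filter.Eventually.of_forall fun y => by
        show f y * π i (R y) = (if (i : ℕ) < n then (1:ℝ) else -1) * (f y * π i y)
        rw [hpiR i y]; ring)]
    exact integral_const_mul _ _
  -- symmetric Gram integrals
  have hGsymm : ∀ i j : Fin (n + m),
      (∫ x, π i x * π j x ∂μ₀) = ∫ x, π j x * π i x ∂μ₀ := fun i j =>
    integral_congr_ae (Filter.Eventually.of_forall fun x => mul_comm _ _)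
  -- odd-even Gram integrals vanish
  have hGodd : ∀ i j : Fin (n + m), (i : ℕ) < n → n ≤ (j : ℕ) →
      (∫ x, π i x * π j x ∂μ₀) = 0 := by
    intro i j hi hj
    have h1 := hflip' (π i) j
    rw [if_neg (not_lt.mpr hj)] at h1
    have h2 : (∫ y, π i (R y) * π j y ∂μ₀) = ∫ y, π i y * π j y ∂μ₀ := by
      apply integral_congr_ae
      filter_upwards with y
      rw [congrFun (hπR_even i hi) y]
    rw [h2] at h1
    linarith
  -- L² membership of spans
  have hspanL2 : ∀ v : Fin n → ℝ,
      MemLp (fun x => ∑ i, v i * π (Fin.castAdd m i) x) 2 μ₀ := by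
    intro v
    exact memLp_finset_sum Finset.univ fun i _ => (hπL2 (Fin.castAdd m i)).const_mul (v i)
  -- T only depends on the a.e. class
  have hTcongr : ∀ f g : S → ℝ, f =ᵐ[μ₀] g → ∀ x, T f x = T g x := by
    intro f g hfg x
    rw [hT, hT]
    congr 1
    refine Finset.sum_congr rfl fun i _ => Finset.sum_congr rfl fun j _ => ?_
    have : (∫ y, f y * π i y ∂μ₀) = ∫ y, g y * π i y ∂μ₀ := by
      apply integral_congr_ae
      filter_upwards [hfg] with y hy
      rw [hy]
    rw [this]
  -- inner products of span elements
  have hip : ∀ (v : Fin n → ℝ) (i : Fin (n + m)),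
      (∫ y, (∑ k : Fin n, v k * π (Fin.castAdd m k) y) * π i y ∂μ₀)
        = ∑ k : Fin n, v k * ∫ y, π (Fin.castAdd m k) y * π i y ∂μ₀ := by
    intro v i
    rw [show (fun y => (∑ k : Fin n, v k * π (Fin.castAdd m k) y) * π i y)
        = fun y => ∑ k : Fin n, v k * (π (Fin.castAdd m k) y * π i y) from
      funext fun y => by rw [Finset.sum_mul]; exact Finset.sum_congr rfl fun k _ => by ring]
    rw [integral_finset_sum _ fun k _ =>
      ((hmul _ _ (hπL2 (Fin.castAdd m k)) (hπL2 i)).const_mul (v k))]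
    exact Finset.sum_congr rfl fun k _ => integral_const_mul _ _
  -- action of T on the span: matrix Λ
  have hTspan : ∀ (v : Fin n → ℝ) (x : S),
      T (fun y => ∑ i, v i * π (Fin.castAdd m i) y) x
        = ∑ j : Fin n, Λ.mulVec v j * π (Fin.castAdd m j) x := by
    intro v x
    rw [hT]
    simp only [hip]
    have hmv : ∀ j : Fin n, Λ.mulVec v j
        = ∑ i : Fin n, (2 * ∑ k : Fin n, A (Fin.castAdd m j) (Fin.castAdd m k) *
            ∫ y, π (Fin.castAdd m k) y * π (Fin.castAdd m i) y ∂μ₀) * v i := by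
      intro j
      simp only [Matrix.mulVec, dotProduct, hΛ]
    trans 2 * ∑ i : Fin n, ∑ j : Fin n,
        A (Fin.castAdd m i) (Fin.castAdd m j) *
          (∑ k : Fin n, v k * ∫ y, π (Fin.castAdd m k) y * π (Fin.castAdd m i) y ∂μ₀) *
          π (Fin.castAdd m j) x
    · congr 1
      rw [Fin.sum_univ_add]
      have hnat : (∑ i : Fin m, ∑ j : Fin (n + m),
          A (Fin.natAdd n i) j *
            (∑ k : Fin n, v k * ∫ y, π (Fin.castAdd m k) y * π (Fin.natAdd n i) y ∂μ₀) *
            π j x) = 0 := by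
        refine Finset.sum_eq_zero fun i _ => ?_
        have h0 : (∑ k : Fin n, v k *
            ∫ y, π (Fin.castAdd m k) y * π (Fin.natAdd n i) y ∂μ₀) = 0 := by
          refine Finset.sum_eq_zero fun k _ => ?_
          rw [hGodd _ _ (by simpa using k.isLt) (by simp), mul_zero]
        refine Finset.sum_eq_zero fun j _ => ?_
        rw [h0, mul_zero, zero_mul]
      rw [hnat, add_zero]
      refine Finset.sum_congr rfl fun i _ => ?_
      rw [Fin.sum_univ_add]
      have hnat2 : (∑ j : Fin m,
          A (Fin.castAdd m i) (Fin.natAdd n j) *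
            (∑ k : Fin n, v k * ∫ y, π (Fin.castAdd m k) y * π (Fin.castAdd m i) y ∂μ₀) *
            π (Fin.natAdd n j) x) = 0 := by
        refine Finset.sum_eq_zero fun j _ => ?_
        rw [hblock _ _ (Or.inl ⟨by simpa using i.isLt, by simp⟩), zero_mul, zero_mul]
      rw [hnat2, add_zero]
    · rw [stmt4_aux (fun i j => A (Fin.castAdd m i) (Fin.castAdd m j))
        (fun k i => ∫ y, π (Fin.castAdd m k) y * π (Fin.castAdd m i) y ∂μ₀)
        (fun i j => hAsymm.apply _ _) (fun i j => hGsymm _ _) v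
        (fun j => π (Fin.castAdd m j) x)]
      exact Finset.sum_congr rfl fun j _ => by rw [hmv j]
  -- PART 1: eigenspace is contained in E₊
  have part1 : ∀ f : S → ℝ, MemLp f 2 μ₀ → T f =ᵐ[μ₀] (fun x => lam * f x) →
      ∃ c : Fin n → ℝ, f =ᵐ[μ₀] fun x => ∑ i, c i * π (Fin.castAdd m i) x := by
    intro f hf heig
    by_cases hf0 : f =ᵐ[μ₀] (fun _ => (0:ℝ))
    · exact ⟨0, by simpa using hf0⟩
    -- g = f ∘ R is also an eigenfunction
    have hgL2 : MemLp (fun y => f (R y)) 2 μ₀ := hf.comp_measurePreserving hR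
    have hTg : ∀ x, T (fun y => f (R y)) x = T f (R x) := by
      intro x
      rw [hT, hT]
      congr 1
      refine Finset.sum_congr rfl fun i _ => Finset.sum_congr rfl fun j _ => ?_
      rw [hflip' f i, hpiR j x]
      rcases lt_or_ge (i : ℕ) n with hi | hi <;> rcases lt_or_ge (j : ℕ) n with hj | hj
      · rw [if_pos hi, if_pos hj]; ring
      · rw [hblock i j (Or.inl ⟨hi, hj⟩)]; ring
      · rw [hblock i j (Or.inr ⟨hi, hj⟩)]; ring
      · rw [if_neg (not_lt.mpr hi), if_neg (not_lt.mpr hj)]; ring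
    have heig_g : T (fun y => f (R y)) =ᵐ[μ₀] fun x => lam * f (R x) := by
      have h1 : ∀ᵐ x ∂μ₀, T f (R x) = lam * f (R x) :=
        hR.quasiMeasurePreserving.tendsto_ae.eventually heig
      filter_upwards [h1] with x hx
      rw [hTg x, hx]
    obtain ⟨c, hc⟩ := honedim (fun y => f (R y)) f hgL2 heig_g hf heig hf0
    -- c² = 1
    have hc2 : f =ᵐ[μ₀] fun x => c * (c * f x) := by
      have h1 : ∀ᵐ x ∂μ₀, f (R (R x)) = c * f (R x) :=
        hR.quasiMeasurePreserving.tendsto_ae.eventually hc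
      have h2 : ∀ᵐ x ∂μ₀, f (R x) = c * f x := hc
      filter_upwards [h1, h2] with x hx1 hx2
      have hRRx : R (R x) = x := congrFun hRR x
      rw [hRRx] at hx1
      rw [hx2] at hx1
      exact hx1
    have hcc : c = 1 ∨ c = -1 := by
      by_contra h
      push_neg at h
      apply hf0
      filter_upwards [hc2] with x hx
      have h1 : (1 - c ^ 2) * f x = 0 := by nlinarith [hx]
      have h2 : (1 : ℝ) - c ^ 2 ≠ 0 := by
        intro heq
        rcases mul_eq_zero.mp (show (1 - c) * (1 + c) = 0 by nlinarith) with h' | h'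
        · exact h.1 (by linarith)
        · exact h.2 (by linarith)
      have := mul_eq_zero.mp h1
      tauto
    -- c = -1 is impossible by single-signedness
    have hc1 : c = 1 := by
      rcases hcc with h1 | hm1
      · exact h1
      exfalso
      apply hf0
      rcases hsigned f hf heig with hpos | hneg
      · have hposR : ∀ᵐ x ∂μ₀, 0 ≤ f (R x) :=
          hR.quasiMeasurePreserving.tendsto_ae.eventually hpos
        filter_upwards [hc, hpos, hposR] with x h1 h2 h3
        rw [hm1] at h1
        linarith
      · have hnegR : ∀ᵐ x ∂μ₀, f (R x) ≤ 0 :=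
          hR.quasiMeasurePreserving.tendsto_ae.eventually hneg
        filter_upwards [hc, hneg, hnegR] with x h1 h2 h3
        rw [hm1] at h1
        linarith
    have heigR : ∀ᵐ x ∂μ₀, f (R x) = f x := by
      filter_upwards [hc] with x hx
      rw [hc1] at hx
      simpa using hx
    -- odd inner products vanish
    have hiodd : ∀ i : Fin (n + m), n ≤ (i : ℕ) → (∫ y, f y * π i y ∂μ₀) = 0 := by
      intro i hi
      have h1 := hflip' f i
      rw [if_neg (not_lt.mpr hi)] at h1
      have h2 : (∫ y, f (R y) * π i y ∂μ₀) = ∫ y, f y * π i y ∂μ₀ := by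
        apply integral_congr_ae
        filter_upwards [heigR] with y hy
        rw [hy]
      rw [h2] at h1
      linarith
    -- explicit expansion of T f
    have hTfx : ∀ x, T f x = ∑ j : Fin n,
        (2 * ∑ i, A i (Fin.castAdd m j) * ∫ y, f y * π i y ∂μ₀) *
          π (Fin.castAdd m j) x := by
      intro x
      rw [hT, Finset.sum_comm, Fin.sum_univ_add]
      have hz : (∑ j : Fin m, ∑ i, A i (Fin.natAdd n j) *
          (∫ y, f y * π i y ∂μ₀) * π (Fin.natAdd n j) x) = 0 := by
        refine Finset.sum_eq_zero fun j _ => Finset.sum_eq_zero fun i _ => ?_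
        rcases lt_or_ge (i : ℕ) n with hi | hi
        · rw [hblock i _ (Or.inl ⟨hi, by simp⟩), zero_mul, zero_mul]
        · rw [hiodd i hi, mul_zero, zero_mul]
      rw [hz, add_zero, Finset.mul_sum]
      refine Finset.sum_congr rfl fun j _ => ?_
      simp only [Finset.mul_sum, Finset.sum_mul]
      exact Finset.sum_congr rfl fun i _ => by ring
    refine ⟨fun j => (2 * ∑ i, A i (Fin.castAdd m j) * ∫ y, f y * π i y ∂μ₀) / lam, ?_⟩
    filter_upwards [heig] with x hx
    rw [hTfx x] at hx
    have hl : lam ≠ 0 := ne_of_gt hlam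
    have : f x = (∑ j : Fin n,
        (2 * ∑ i, A i (Fin.castAdd m j) * ∫ y, f y * π i y ∂μ₀) *
          π (Fin.castAdd m j) x) / lam := by
      field_simp
      linarith [hx]
    rw [this, Finset.sum_div]
    exact Finset.sum_congr rfl fun j _ => by ring
  refine ⟨part1, ?_, ?_⟩
  -- PART 2: existence of top eigenvector of Λ
  · obtain ⟨f₀, hf₀L2, hf₀eig, hf₀ne⟩ := hex
    obtain ⟨c, hc⟩ := part1 f₀ hf₀L2 hf₀eig
    have hcne : c ≠ 0 := by
      intro h
      apply hf₀ne
      filter_upwards [hc] with x hx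
      rw [hx, h]
      simp
    refine ⟨c, hcne, ?_⟩
    have hkey : (fun x => ∑ j : Fin n, (Λ.mulVec c j - lam * c j) *
        π (Fin.castAdd m j) x) =ᵐ[μ₀] (fun _ => (0:ℝ)) := by
      filter_upwards [hf₀eig, hc] with x h1 h2
      have hTf₀ : T f₀ x = T (fun y => ∑ i, c i * π (Fin.castAdd m i) y) x :=
        hTcongr f₀ _ hc x
      have h3 : (∑ j : Fin n, Λ.mulVec c j * π (Fin.castAdd m j) x)
          = lam * ∑ i : Fin n, c i * π (Fin.castAdd m i) x := by
        rw [← hTspan c x, ← hTf₀, h1, h2]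
      simp only [sub_mul, Finset.sum_sub_distrib]
      rw [h3, Finset.mul_sum]
      simp [mul_assoc]
    have hz := hind _ hkey
    funext j
    have hj : Λ.mulVec c j - lam * c j = 0 := congrFun hz j
    have : Λ.mulVec c j = lam * c j := by linarith
    simpa [Pi.smul_apply, smul_eq_mul] using this
  -- PART 3: lam is the largest eigenvalue of Λ
  · intro μ v hv hμ
    have hgL2 := hspanL2 v
    have hTgx : ∀ x, T (fun y => ∑ i, v i * π (Fin.castAdd m i) y) x
        = μ * ∑ i, v i * π (Fin.castAdd m i) x := by
      intro x
      rw [hTspan v x, hμ, Finset.mul_sum]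
      exact Finset.sum_congr rfl fun j _ => by
        simp [Pi.smul_apply, smul_eq_mul]; ring
    have hnm := hnorm _ hgL2
    have hTint : (∫ x, (T (fun y => ∑ i, v i * π (Fin.castAdd m i) y) x) ^ 2 ∂μ₀)
        = μ ^ 2 * ∫ x, (∑ i, v i * π (Fin.castAdd m i) x) ^ 2 ∂μ₀ := by
      rw [show (fun x => (T (fun y => ∑ i, v i * π (Fin.castAdd m i) y) x) ^ 2)
          = fun x => μ ^ 2 * (∑ i, v i * π (Fin.castAdd m i) x) ^ 2 from
        funext fun x => by rw [hTgx x]; ring]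
      exact integral_const_mul _ _
    rw [hTint] at hnm
    have hgint : Integrable (fun x => (∑ i, v i * π (Fin.castAdd m i) x) ^ 2) μ₀ := by
      have := hmul _ _ hgL2 hgL2
      simpa [pow_two] using this
    have hgpos : 0 < ∫ x, (∑ i, v i * π (Fin.castAdd m i) x) ^ 2 ∂μ₀ := by
      rcases (integral_nonneg (f := fun x => (∑ i, v i * π (Fin.castAdd m i) x) ^ 2) fun x => sq_nonneg _).lt_or_eq with h | h
      · exact h
      exfalso
      apply hv
      apply hind
      have h0 : (fun x => (∑ i, v i * π (Fin.castAdd m i) x) ^ 2) =ᵐ[μ₀] 0 :=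
        (integral_eq_zero_iff_of_nonneg (fun x => sq_nonneg _) hgint).mp h.symm
      filter_upwards [h0] with x hx
      simp only [Pi.zero_apply] at hx
      exact pow_eq_zero_iff two_ne_zero |>.mp hx
    have h1 : μ ^ 2 ≤ lam ^ 2 := (mul_le_mul_iff_of_pos_right hgpos).mp hnm
    nlinarith [h1, hlam, sq_nonneg (μ - lam), sq_nonneg (μ + lam)]
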